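/- Let n, p ≥ 1, let X, U ∈ ℝ^{n×p} with W = X + U, and denote by x_i, u_i, w_i the i-th rows. Let β⁰ ∈ ℝ^p, y ∈ ℝ^n, and set ε_i = y_i − x_iᵀβ⁰. Assume: (i) (1/n)∑_{i=1}^n w_{ij}² = 1 for every j; (ii) (1/n) max_{1≤j≤p} |∑_{i=1}^n w_{ij} ε_i| ≤ λ; (iii) |u_{ij}| ≤ δ for all i, j. Then for every j = 1,…,p: (1/n)|∑_{i=1}^n w_{ij}(y_i − w_iᵀβ⁰)| ≤ λ + δ‖β⁰‖₁, i.e. β⁰ is a feasible point of the matrix uncertainty selector. -/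

import Mathlib

/-- Linear-model special case of Proposition 1: under the additive measurement
error model `W = X + U`, standardized measured covariates, the residual bound
`(1/n) max_j |∑ᵢ wᵢⱼ εᵢ| ≤ λ` and the elementwise error bound `|uᵢⱼ| ≤ δ`, the
true coefficient vector `β⁰` is feasible for the matrix uncertainty selector:
`(1/n) |∑ᵢ wᵢⱼ (yᵢ − wᵢᵀβ⁰)| ≤ λ + δ ‖β⁰‖₁` for every `j`. -/
theorem stmt_2 (n p : ℕ) (hn : 1 ≤ n) (hp : 1 ≤ p)
    (X U W : Fin n → Fin p → ℝ)
    (hW : ∀ i j, W i j = X i j + U i j)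
    (β : Fin p → ℝ) (y : Fin n → ℝ) (ε : Fin n → ℝ)
    (hε : ∀ i, ε i = y i - ∑ j, X i j * β j)
    (lam δ : ℝ)
    (hstd : ∀ j, (1 / (n : ℝ)) * ∑ i, (W i j) ^ 2 = 1)
    (hlam : ∀ j, (1 / (n : ℝ)) * |∑ i, W i j * ε i| ≤ lam)
    (hδ : ∀ i j, |U i j| ≤ δ) :
    ∀ j, (1 / (n : ℝ)) * |∑ i, W i j * (y i - ∑ j', W i j' * β j')| ≤
      lam + δ * ∑ j', |β j'| := by
  intro j
  have hnpos : (0 : ℝ) < n := by exact_mod_cast hn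
  have hδ0 : 0 ≤ δ := le_trans (abs_nonneg _) (hδ ⟨0, hn⟩ ⟨0, hp⟩)
  -- rewrite the residual
  have key : ∀ i, y i - ∑ j', W i j' * β j' = ε i - ∑ j', U i j' * β j' := by
    intro i
    rw [hε i]
    simp only [hW]
    rw [show (∑ j', (X i j' + U i j') * β j') = (∑ j', X i j' * β j') + ∑ j', U i j' * β j' by
      rw [← Finset.sum_add_distrib]; congr 1; ext j'; ring]
    ring
  have split : (∑ i, W i j * (y i - ∑ j', W i j' * β j'))
      = (∑ i, W i j * ε i) - ∑ j', β j' * ∑ i, W i j * U i j' := by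
    simp only [key, mul_sub]
    rw [Finset.sum_sub_distrib]
    congr 1
    simp_rw [Finset.mul_sum]
    rw [Finset.sum_comm]
    apply Finset.sum_congr rfl
    intro j' _
    apply Finset.sum_congr rfl
    intro i _
    ring
  -- sum of squares = n
  have hsq : (∑ i, (W i j) ^ 2) = n := by
    have := hstd j
    field_simp at this
    linarith [this]
  -- ∑ |W i j| ≤ n
  have habsW : (∑ i, |W i j|) ≤ n := by
    have cs := sq_sum_le_card_mul_sum_sq (s := Finset.univ) (f := fun i : Fin n => |W i j|)
    simp only [Finset.card_univ, Fintype.card_fin, sq_abs] at cs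
    rw [hsq] at cs
    have h0 : 0 ≤ ∑ i, |W i j| := Finset.sum_nonneg fun i _ => abs_nonneg _
    nlinarith [cs, h0, hnpos]
  have hterm : ∀ j', |∑ i, W i j * U i j'| ≤ δ * n := by
    intro j'
    calc |∑ i, W i j * U i j'| ≤ ∑ i, |W i j * U i j'| := Finset.abs_sum_le_sum_abs _ _
      _ ≤ ∑ i, |W i j| * δ := by
          apply Finset.sum_le_sum
          intro i _
          rw [abs_mul]
          exact mul_le_mul_of_nonneg_left (hδ i j') (abs_nonneg _)
      _ = (∑ i, |W i j|) * δ := by rw [← Finset.sum_mul]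
      _ ≤ n * δ := mul_le_mul_of_nonneg_right habsW hδ0
      _ = δ * n := by ring
  have hcross : |∑ j', β j' * ∑ i, W i j * U i j'| ≤ δ * n * ∑ j', |β j'| := by
    calc |∑ j', β j' * ∑ i, W i j * U i j'| ≤ ∑ j', |β j' * ∑ i, W i j * U i j'| :=
          Finset.abs_sum_le_sum_abs _ _
      _ ≤ ∑ j', |β j'| * (δ * n) := by
          apply Finset.sum_le_sum
          intro j' _
          rw [abs_mul]
          exact mul_le_mul_of_nonneg_left (hterm j') (abs_nonneg _)
      _ = δ * n * ∑ j', |β j'| := by rw [← Finset.sum_mul]; ring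
  rw [split]
  have habs : |(∑ i, W i j * ε i) - ∑ j', β j' * ∑ i, W i j * U i j'|
      ≤ |∑ i, W i j * ε i| + δ * n * ∑ j', |β j'| :=
    le_trans (abs_sub _ _) (by linarith [hcross])
  have := hlam j
  have hfin : (1 / (n : ℝ)) * (|∑ i, W i j * ε i| + δ * n * ∑ j', |β j'|)
      = (1 / (n : ℝ)) * |∑ i, W i j * ε i| + δ * ∑ j', |β j'| := by
    field_simp
  calc (1 / (n : ℝ)) * |(∑ i, W i j * ε i) - ∑ j', β j' * ∑ i, W i j * U i j'|
      ≤ (1 / (n : ℝ)) * (|∑ i, W i j * ε i| + δ * n * ∑ j', |β j'|) := by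
        apply mul_le_mul_of_nonneg_left habs (by positivity)
    _ = (1 / (n : ℝ)) * |∑ i, W i j * ε i| + δ * ∑ j', |β j'| := hfin
    _ ≤ lam + δ * ∑ j', |β j'| := by linarith
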